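/- arXiv:2409.02944 — 6 statements merged into one kernel-verified Lean document; each statement's English description precedes it below -/
import Mathlib

section
/- For f : [a,∞) → ℝ, a point t₀ ∈ (a,∞), and α ∈ (0,1), the conformable derivative T_a^α f(t₀) exists if and only if f has a first derivative at t₀, and in that case T_a^α f(t₀) = (t₀−a)^{1−α} f'(t₀). -/
open Filter Topology Set

/-- The conformable (left-sided) derivative of order `α` with lower terminal `a`:
`f` has conformable derivative `L` at `t` if the difference quotient
`(f (t + θ*(t-a)^(1-α)) - f t)/θ` tends to `L` as `θ → 0`. -/
def HasConfDerivAt (a α : ℝ) (f : ℝ → ℝ) (t L : ℝ) : Prop :=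
  Tendsto (fun θ : ℝ => (f (t + θ * (t - a) ^ (1 - α)) - f t) / θ) (𝓝[≠] (0:ℝ)) (𝓝 L)

/-- The conformable integral of order `α` with lower terminal `a`. -/
noncomputable def confInt (a α : ℝ) (f : ℝ → ℝ) (t : ℝ) : ℝ :=
  ∫ s in a..t, (s - a) ^ (α - 1) * f s

theorem conf_deriv_iff_hasDerivAt (a α t₀ : ℝ) (f : ℝ → ℝ)
    (hα : α ∈ Set.Ioo (0:ℝ) 1) (ht₀ : t₀ ∈ Set.Ioi a) :
    ((∃ L, HasConfDerivAt a α f t₀ L) ↔ ∃ f', HasDerivAt f f' t₀) ∧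
      (∀ f', HasDerivAt f f' t₀ →
        HasConfDerivAt a α f t₀ ((t₀ - a) ^ (1 - α) * f')) := by
  set c : ℝ := (t₀ - a) ^ (1 - α) with hcdef
  have hc : 0 < c := Real.rpow_pos_of_pos (sub_pos.mpr ht₀) _
  have hcne : c ≠ 0 := hc.ne'
  -- the affine map and its inverse between punctured neighborhoods
  have hg : Tendsto (fun θ : ℝ => t₀ + θ * c) (𝓝[≠] (0:ℝ)) (𝓝[≠] t₀) := by
    apply tendsto_nhdsWithin_of_tendsto_nhds_of_eventually_within
    · have : Tendsto (fun θ : ℝ => t₀ + θ * c) (𝓝 0) (𝓝 (t₀ + 0 * c)) := by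
        exact (tendsto_const_nhds.add ((tendsto_id.mul tendsto_const_nhds)))
      simpa using this.mono_left nhdsWithin_le_nhds
    · filter_upwards [self_mem_nhdsWithin] with θ hθ
      simp only [Set.mem_compl_iff, Set.mem_singleton_iff] at hθ ⊢
      intro h
      apply hθ
      have : θ * c = 0 := by linarith [h]
      exact (mul_eq_zero.mp this).resolve_right hcne
  have hh : Tendsto (fun y : ℝ => (y - t₀) / c) (𝓝[≠] t₀) (𝓝[≠] (0:ℝ)) := by
    apply tendsto_nhdsWithin_of_tendsto_nhds_of_eventually_within
    · have : Tendsto (fun y : ℝ => (y - t₀) / c) (𝓝 t₀) (𝓝 ((t₀ - t₀) / c)) :=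
        (tendsto_id.sub tendsto_const_nhds).div_const c
      simpa using this.mono_left nhdsWithin_le_nhds
    · filter_upwards [self_mem_nhdsWithin] with y hy
      simp only [Set.mem_compl_iff, Set.mem_singleton_iff] at hy ⊢
      intro h
      apply hy
      have : y - t₀ = 0 := by
        field_simp at h; simpa using h
      linarith
  -- key identity
  have key : ∀ θ : ℝ, θ ≠ 0 →
      (f (t₀ + θ * c) - f t₀) / θ = c * slope f t₀ (t₀ + θ * c) := by
    intro θ hθ
    rw [slope_def_field]
    field_simp
    ring
  have fwd : ∀ L, HasConfDerivAt a α f t₀ L →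
      Tendsto (slope f t₀) (𝓝[≠] t₀) (𝓝 (L / c)) := by
    intro L hL
    have h1 : Tendsto (fun θ : ℝ => (f (t₀ + θ * c) - f t₀) / θ / c) (𝓝[≠] (0:ℝ))
        (𝓝 (L / c)) := hL.div_const c
    have h2 : Tendsto (fun θ : ℝ => slope f t₀ (t₀ + θ * c)) (𝓝[≠] (0:ℝ)) (𝓝 (L / c)) := by
      refine h1.congr' ?_
      filter_upwards [self_mem_nhdsWithin] with θ hθ
      simp only [Set.mem_compl_iff, Set.mem_singleton_iff] at hθ
      rw [key θ hθ]
      field_simp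
    have h3 := h2.comp hh
    refine h3.congr' ?_
    filter_upwards [self_mem_nhdsWithin] with y _
    simp only [Function.comp]
    congr 1
    field_simp
    ring
  have bwd : ∀ f', HasDerivAt f f' t₀ → HasConfDerivAt a α f t₀ (c * f') := by
    intro f' hf'
    have hs : Tendsto (slope f t₀) (𝓝[≠] t₀) (𝓝 f') :=
      hasDerivAt_iff_tendsto_slope.mp hf'
    have h1 : Tendsto (fun θ : ℝ => c * slope f t₀ (t₀ + θ * c)) (𝓝[≠] (0:ℝ))
        (𝓝 (c * f')) := (tendsto_const_nhds.mul (hs.comp hg))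
    unfold HasConfDerivAt
    refine h1.congr' ?_ |>.mono_left le_rfl
    filter_upwards [self_mem_nhdsWithin] with θ hθ
    simp only [Set.mem_compl_iff, Set.mem_singleton_iff] at hθ
    rw [← hcdef, key θ hθ]
  refine ⟨⟨?_, ?_⟩, bwd⟩
  · rintro ⟨L, hL⟩
    exact ⟨L / c, hasDerivAt_iff_tendsto_slope.mpr (fwd L hL)⟩
  · rintro ⟨f', hf'⟩
    exact ⟨c * f', bwd f' hf'⟩
end

section
/- Let f : [a,∞) → ℝ be continuous on [a,∞) and α ∈ (0,1]. Then for every t₀ ∈ (a,∞), T_a^α (I_a^α f)(t₀) = f(t₀), i.e., the conformable derivative is a left inverse of the conformable integral on continuous functions. -/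
open Filter Topology Set

theorem conf_deriv_conf_int (a α : ℝ) (f : ℝ → ℝ)
    (hα : α ∈ Set.Ioc (0:ℝ) 1) (hf : ContinuousOn f (Set.Ici a)) :
    ∀ t₀ ∈ Set.Ioi a, HasConfDerivAt a α (confInt a α f) t₀ (f t₀) := by
  obtain ⟨hα0, hα1⟩ := hα
  intro t₀ ht₀
  rw [Set.mem_Ioi] at ht₀
  have hta : (0:ℝ) < t₀ - a := by linarith
  set g : ℝ → ℝ := fun s => (s - a) ^ (α - 1) * f s with hg
  -- g is continuous on Ioi a
  have hgc : ContinuousOn g (Set.Ioi a) := by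
    apply ContinuousOn.mul
    · intro s hs
      rw [Set.mem_Ioi] at hs
      exact ((continuousAt_id.sub continuousAt_const).rpow_const
        (Or.inl (by simp; linarith))).continuousWithinAt
    · exact hf.mono (Set.Ioi_subset_Ici le_rfl)
  -- interval integrability
  have hint : IntervalIntegrable g MeasureTheory.volume a t₀ := by
    have h1 : IntervalIntegrable (fun s : ℝ => (s - a) ^ (α - 1))
        MeasureTheory.volume a t₀ := by
      have h0 : IntervalIntegrable (fun x : ℝ => x ^ (α - 1))
          MeasureTheory.volume 0 (t₀ - a) :=
        intervalIntegral.intervalIntegrable_rpow' (by linarith)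
      have := h0.comp_sub_right a
      simpa using this
    exact h1.mul_continuousOn (hf.mono (by
      rw [Set.uIcc_of_le (le_of_lt ht₀)]
      exact Set.Icc_subset_Ici_self))
  have hFderiv : HasDerivAt (confInt a α f) (g t₀) t₀ := by
    have hmeas : StronglyMeasurableAtFilter g (𝓝 t₀) :=
      hgc.stronglyMeasurableAtFilter isOpen_Ioi t₀ ht₀
    have hcont : ContinuousAt g t₀ := hgc.continuousAt (isOpen_Ioi.mem_nhds ht₀)
    exact intervalIntegral.integral_hasDerivAt_right hint hmeas hcont
  set c : ℝ := (t₀ - a) ^ (1 - α) with hc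
  have hcpos : 0 < c := Real.rpow_pos_of_pos hta _
  have hslope : Tendsto (slope (confInt a α f) t₀) (𝓝[≠] t₀) (𝓝 (g t₀)) :=
    hasDerivAt_iff_tendsto_slope.mp hFderiv
  have hmap : Tendsto (fun θ : ℝ => t₀ + θ * c) (𝓝[≠] (0:ℝ)) (𝓝[≠] t₀) := by
    rw [tendsto_nhdsWithin_iff]
    constructor
    · have : Tendsto (fun θ : ℝ => t₀ + θ * c) (𝓝 0) (𝓝 (t₀ + 0 * c)) :=
        (continuous_const.add (continuous_id.mul continuous_const)).tendsto 0
      simp only [zero_mul, add_zero] at this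
      exact this.mono_left nhdsWithin_le_nhds
    · filter_upwards [self_mem_nhdsWithin] with θ hθ
      simp only [Set.mem_compl_iff, Set.mem_singleton_iff] at hθ ⊢
      intro h
      apply hθ
      have : θ * c = 0 := by linarith
      exact (mul_eq_zero.mp this).resolve_right (ne_of_gt hcpos)
  have hcomp : Tendsto (fun θ : ℝ => c * slope (confInt a α f) t₀ (t₀ + θ * c))
      (𝓝[≠] (0:ℝ)) (𝓝 (c * g t₀)) := (hslope.comp hmap).const_mul c
  have hcg : c * g t₀ = f t₀ := by
    have : c * (t₀ - a) ^ (α - 1) = 1 := by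
      rw [hc, ← Real.rpow_add hta]
      norm_num
    simp only [hg]
    rw [← mul_assoc, this, one_mul]
  rw [hcg] at hcomp
  unfold HasConfDerivAt
  refine hcomp.congr' ?_
  filter_upwards [self_mem_nhdsWithin] with θ hθ
  simp only [Set.mem_compl_iff, Set.mem_singleton_iff] at hθ
  rw [slope_def_field]
  field_simp
  rw [← hc]
  ring
end

section
/- Let f : [a,∞) → ℝ, α ∈ (0,1], and suppose T_a^α f(a) := lim_{t→a+} T_a^α f(t) exists and is nonzero, with f α-differentiable on some (a, a+ε). Then for every β ∈ (α,1], the limit lim_{t→a+} T_a^β f(t) does not exist (as a finite limit). -/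
open Filter Topology Set

lemma conf_rescale (a α β : ℝ) (f : ℝ → ℝ) (t L1 L2 : ℝ) (ht : a < t)
    (h1 : HasConfDerivAt a α f t L1) (h2 : HasConfDerivAt a β f t L2) :
    L2 = (t - a) ^ (α - β) * L1 := by
  have hta : (0:ℝ) < t - a := sub_pos.mpr ht
  set c : ℝ := (t - a) ^ (α - β) with hc
  have hc0 : c ≠ 0 := (Real.rpow_pos_of_pos hta _).ne'
  have hg : Tendsto (fun θ : ℝ => θ * c) (𝓝[≠] (0:ℝ)) (𝓝[≠] (0:ℝ)) := by
    apply tendsto_nhdsWithin_of_tendsto_nhds_of_eventually_within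
    · have : Tendsto (fun θ : ℝ => θ * c) (𝓝 0) (𝓝 (0 * c)) :=
        (continuous_id.mul continuous_const).tendsto 0
      simpa using this.mono_left nhdsWithin_le_nhds
    · filter_upwards [eventually_mem_nhdsWithin] with θ (hθ : θ ≠ 0)
      exact mul_ne_zero hθ hc0
  have h3 : Tendsto (fun θ : ℝ => (f (t + θ * (t - a) ^ (1 - β)) - f t) / θ)
      (𝓝[≠] (0:ℝ)) (𝓝 (L1 * c)) := by
    have hcomp := (h1.comp hg).mul_const c
    apply hcomp.congr'
    filter_upwards [eventually_mem_nhdsWithin] with θ (hθ : θ ≠ 0)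
    have hexp : (θ * c) * (t - a) ^ (1 - α) = θ * (t - a) ^ (1 - β) := by
      rw [hc, mul_assoc, ← Real.rpow_add hta]
      ring_nf
    simp only [Function.comp]
    rw [hexp]
    field_simp
  have := tendsto_nhds_unique h2 h3
  rw [this, mul_comm]

theorem conf_deriv_lower_terminal_not_exists (a α ε L : ℝ) (f T : ℝ → ℝ)
    (hα : α ∈ Set.Ioc (0:ℝ) 1) (hε : 0 < ε) (hL0 : L ≠ 0)
    (hT : ∀ t ∈ Set.Ioo a (a + ε), HasConfDerivAt a α f t (T t))
    (hL : Tendsto T (𝓝[>] a) (𝓝 L)) :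
    ∀ β ∈ Set.Ioc α 1, ∀ S : ℝ → ℝ,
      (∀ t ∈ Set.Ioo a (a + ε), HasConfDerivAt a β f t (S t)) →
        ∀ M : ℝ, ¬ Tendsto S (𝓝[>] a) (𝓝 M) := by
  intro β hβ S hS M hM
  have hαβ : α < β := hβ.1
  have heq : ∀ᶠ t in 𝓝[>] a, (t - a) ^ (β - α) * S t = T t := by
    filter_upwards [Ioo_mem_nhdsGT_of_mem ⟨le_refl a, lt_add_of_pos_right a hε⟩]
      with t htm
    have hta : (0:ℝ) < t - a := sub_pos.mpr htm.1
    have hst := conf_rescale a α β f t (T t) (S t) htm.1 (hT t htm) (hS t htm)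
    rw [hst, ← mul_assoc, ← Real.rpow_add hta]
    simp
  have hpow : Tendsto (fun t : ℝ => (t - a) ^ (β - α)) (𝓝[>] a) (𝓝 0) := by
    have h1 : Tendsto (fun t : ℝ => t - a) (𝓝[>] a) (𝓝 0) := by
      have : Tendsto (fun t : ℝ => t - a) (𝓝 a) (𝓝 (a - a)) :=
        (continuous_id.sub continuous_const).tendsto a
      simpa using this.mono_left nhdsWithin_le_nhds
    have h2 : ContinuousAt (fun x : ℝ => x ^ (β - α)) 0 :=
      Real.continuousAt_rpow_const 0 (β - α) (Or.inr (by linarith))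
    have := h2.tendsto.comp h1
    simpa [Function.comp_def, Real.zero_rpow (by linarith : β - α ≠ 0)] using this
  have hT0 : Tendsto T (𝓝[>] a) (𝓝 0) := by
    have := hpow.mul hM
    rw [zero_mul] at this
    exact this.congr' heq
  exact hL0 (tendsto_nhds_unique hL hT0)
end

section
/- With the modified lower-terminal definition, for f : [a,∞) → ℝ, a point t₀ ∈ [a,∞), and α ∈ (0,1): the conformable derivative T_a^α f(t₀) exists if and only if f has a (right, if t₀=a) first derivative at t₀, and T_a^α f(t₀) = (t₀−a)^{1−α} f'(t₀). -/
open Filter Topology Set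

/-- Modified conformable derivative: at the lower terminal `a` it exists iff the
right derivative of `f` at `a` exists, with value `f'(a+)` when `α = 1` and `0`
when `α ∈ (0,1)`; away from `a` it is the usual conformable derivative. -/
def MHasConfDerivAt (a α : ℝ) (f : ℝ → ℝ) (t L : ℝ) : Prop :=
  if t = a then
    ∃ d : ℝ, HasDerivWithinAt f d (Set.Ici a) a ∧ L = (if α = 1 then d else 0)
  else HasConfDerivAt a α f t L

theorem mconf_deriv_iff_deriv (a α t₀ : ℝ) (f : ℝ → ℝ)
    (hα : α ∈ Set.Ioo (0:ℝ) 1) (ht₀ : t₀ ∈ Set.Ici a) :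
    ((∃ L, MHasConfDerivAt a α f t₀ L) ↔ ∃ d, HasDerivWithinAt f d (Set.Ici a) t₀) ∧
      (∀ d, HasDerivWithinAt f d (Set.Ici a) t₀ →
        MHasConfDerivAt a α f t₀ ((t₀ - a) ^ (1 - α) * d)) := by
  obtain ⟨hα0, hα1⟩ := hα
  rcases eq_or_lt_of_le (Set.mem_Ici.mp ht₀ : a ≤ t₀) with h | h
  · -- t₀ = a
    subst h
    have hz : ((a:ℝ) - a) ^ (1 - α) = 0 := by
      rw [sub_self, Real.zero_rpow (by linarith)]
    simp only [MHasConfDerivAt, if_pos rfl, hα1.ne, if_false]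
    constructor
    · constructor
      · rintro ⟨L, d, hd, -⟩; exact ⟨d, hd⟩
      · rintro ⟨d, hd⟩; exact ⟨0, d, hd, rfl⟩
    · intro d hd
      exact ⟨d, hd, by rw [hz, zero_mul]⟩
  · -- a < t₀
    have hne : t₀ ≠ a := ne_of_gt h
    set c : ℝ := (t₀ - a) ^ (1 - α) with hc
    have hcpos : 0 < c := Real.rpow_pos_of_pos (sub_pos.mpr h) _
    have hc0 : c ≠ 0 := ne_of_gt hcpos
    have hnhds : Set.Ici a ∈ 𝓝 t₀ := Ici_mem_nhds h
    -- forward: derivative → conformable derivative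
    have hfwd : ∀ d : ℝ, HasDerivAt f d t₀ → HasConfDerivAt a α f t₀ (c * d) := by
      intro d hd
      have hd' := hasDerivAt_iff_tendsto_slope.mp hd
      have hφ : Tendsto (fun θ : ℝ => t₀ + θ * c) (𝓝[≠] (0:ℝ)) (𝓝[≠] t₀) := by
        rw [tendsto_nhdsWithin_iff]
        refine ⟨?_, ?_⟩
        · have h1 : Tendsto (fun θ : ℝ => t₀ + θ * c) (𝓝 (0:ℝ)) (𝓝 (t₀ + 0 * c)) :=
            tendsto_const_nhds.add (tendsto_id.mul tendsto_const_nhds)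
          simpa using h1.mono_left nhdsWithin_le_nhds
        · filter_upwards [self_mem_nhdsWithin] with θ hθ
          simp only [Set.mem_compl_iff, Set.mem_singleton_iff] at hθ ⊢
          intro hcon
          apply hθ
          have : θ * c = 0 := by linarith
          exact (mul_eq_zero.mp this).resolve_right hc0
      have hcomp : Tendsto (fun θ : ℝ => c * slope f t₀ (t₀ + θ * c)) (𝓝[≠] (0:ℝ))
          (𝓝 (c * d)) := tendsto_const_nhds.mul (hd'.comp hφ)
      unfold HasConfDerivAt
      rw [← hc]
      refine hcomp.congr' ?_
      filter_upwards [self_mem_nhdsWithin] with θ hθ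
      simp only [Set.mem_compl_iff, Set.mem_singleton_iff] at hθ
      rw [slope_def_field]
      field_simp
      ring
    -- backward: conformable derivative → derivative
    have hbwd : ∀ L : ℝ, HasConfDerivAt a α f t₀ L → HasDerivAt f (L / c) t₀ := by
      intro L hL
      rw [hasDerivAt_iff_tendsto_slope]
      have hψ : Tendsto (fun y : ℝ => (y - t₀) / c) (𝓝[≠] t₀) (𝓝[≠] (0:ℝ)) := by
        rw [tendsto_nhdsWithin_iff]
        refine ⟨?_, ?_⟩
        · have h1 : Tendsto (fun y : ℝ => (y - t₀) / c) (𝓝 t₀) (𝓝 ((t₀ - t₀) / c)) :=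
            ((tendsto_id.sub tendsto_const_nhds).div_const c)
          simpa using h1.mono_left nhdsWithin_le_nhds
        · filter_upwards [self_mem_nhdsWithin] with y hy
          simp only [Set.mem_compl_iff, Set.mem_singleton_iff] at hy ⊢
          intro hcon
          apply hy
          have : y - t₀ = 0 := by
            field_simp at hcon; simpa using hcon
          linarith
      unfold HasConfDerivAt at hL
      rw [← hc] at hL
      have hcomp : Tendsto (fun y : ℝ =>
          ((f (t₀ + (y - t₀) / c * c) - f t₀) / ((y - t₀) / c)) / c) (𝓝[≠] t₀)
          (𝓝 (L / c)) := (hL.comp hψ).div_const c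
      refine hcomp.congr' ?_
      filter_upwards [self_mem_nhdsWithin] with y hy
      simp only [Set.mem_compl_iff, Set.mem_singleton_iff] at hy
      have hy' : y - t₀ ≠ 0 := sub_ne_zero.mpr hy
      rw [slope_def_field]
      have : t₀ + (y - t₀) / c * c = y := by field_simp; ring
      rw [this]
      field_simp
    simp only [MHasConfDerivAt, if_neg hne]
    refine ⟨⟨?_, ?_⟩, ?_⟩
    · rintro ⟨L, hL⟩
      exact ⟨L / c, (hbwd L hL).hasDerivWithinAt⟩
    · rintro ⟨d, hd⟩
      exact ⟨c * d, hfwd d (hd.hasDerivAt hnhds)⟩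
    · intro d hd
      exact hfwd d (hd.hasDerivAt hnhds)
end

section
/- With the modified lower-terminal definition, let f : [a,∞) → ℝ, t₀ ∈ [a,∞), α ∈ (0,1), and suppose T_a^α f(t₀) exists. Then T_a^β f(t₀) exists for every β ∈ (0,1], and T_a^α f(t₀) = (t₀−a)^{β−α} T_a^β f(t₀) when t₀ > a, while T_a^β f(t₀) = (t₀−a)^{α−β} T_a^α f(t₀) when t₀ = a and β < α. -/
open Filter Topology Set

theorem mconf_deriv_order_change (a α t₀ L : ℝ) (f : ℝ → ℝ)
    (hα : α ∈ Set.Ioo (0:ℝ) 1) (ht₀ : t₀ ∈ Set.Ici a)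
    (hf : MHasConfDerivAt a α f t₀ L) :
    ∀ β ∈ Set.Ioc (0:ℝ) 1, ∃ M : ℝ, MHasConfDerivAt a β f t₀ M ∧
      (a < t₀ → L = (t₀ - a) ^ (β - α) * M) ∧
      (t₀ = a → β < α → M = (t₀ - a) ^ (α - β) * L) := by
  intro β hβ
  rcases eq_or_lt_of_le (Set.mem_Ici.mp ht₀) with h | h
  · -- t₀ = a
    subst h
    rw [MHasConfDerivAt, if_pos rfl] at hf
    obtain ⟨d, hd, hL⟩ := hf
    have hL0 : L = 0 := by rw [hL, if_neg hα.2.ne]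
    refine ⟨if β = 1 then d else 0, ?_, ?_, ?_⟩
    · rw [MHasConfDerivAt, if_pos rfl]
      exact ⟨d, hd, rfl⟩
    · intro hlt; exact absurd hlt (lt_irrefl _)
    · intro _ hβα
      rw [if_neg (by linarith [hα.2] : β ≠ 1)  , hL0, sub_self,
        Real.zero_rpow (by linarith : α - β ≠ 0), mul_zero]
  · -- a < t₀
    have hne : t₀ ≠ a := (ne_of_gt h)
    rw [MHasConfDerivAt, if_neg hne] at hf
    set c : ℝ := t₀ - a with hc
    have hcpos : 0 < c := sub_pos.mpr h
    set k : ℝ := c ^ (α - β) with hk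
    have hkpos : 0 < k := Real.rpow_pos_of_pos hcpos _
    refine ⟨k * L, ?_, ?_, ?_⟩
    · rw [MHasConfDerivAt, if_neg hne]
      have hmap : Tendsto (fun θ : ℝ => k * θ) (𝓝[≠] (0:ℝ)) (𝓝[≠] (0:ℝ)) := by
        have h1 : Tendsto (fun θ : ℝ => k * θ) (𝓝[≠] (0:ℝ)) (𝓝 (0:ℝ)) := by
          have h0 : Tendsto (fun θ : ℝ => k * θ) (𝓝 (0:ℝ)) (𝓝 (k * 0)) :=
            (continuous_const.mul continuous_id).tendsto 0
          rw [mul_zero] at h0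
          exact h0.mono_left nhdsWithin_le_nhds
        have h2 : Tendsto (fun θ : ℝ => k * θ) (𝓝[≠] (0:ℝ)) (𝓟 {(0:ℝ)}ᶜ) := by
          rw [tendsto_principal]
          filter_upwards [self_mem_nhdsWithin] with x (hx : x ≠ 0)
          exact mul_ne_zero hkpos.ne' hx
        rw [tendsto_nhdsWithin_iff]
        exact ⟨h1, tendsto_principal.mp h2⟩
      have hcomp := (Tendsto.const_mul k (hf.comp hmap))
      refine hcomp.congr' ?_ |>.mono_right ?_
      · filter_upwards [self_mem_nhdsWithin] with θ (hθ : θ ≠ 0)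
        show k * ((f (t₀ + (k * θ) * c ^ (1 - α)) - f t₀) / (k * θ)) = _
        have harg : (k * θ) * c ^ (1 - α) = θ * c ^ (1 - β) := by
          rw [hk, mul_comm k θ, mul_assoc, ← Real.rpow_add hcpos]
          ring_nf
        rw [harg, hc]
        field_simp
      · exact le_of_eq rfl
    · intro _
      rw [hk, ← mul_assoc, ← Real.rpow_add hcpos]
      norm_num
    · intro habs; exact absurd habs hne
end

section
/- Let α, β ∈ (0,1] with β < α, f : [a,∞) → ℝ α-differentiable on some (a, a+ε), and suppose lim_{t→a+} T_a^α f(t) exists and is finite. Then lim_{t→a+} T_a^β f(t) = 0; in particular, under the original limit-based lower-terminal definition, T_a^β f(a) = 0 and does not depend on the value f(a). -/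
open Filter Topology Set

theorem conf_deriv_lower_order_limit_zero (a α β ε L : ℝ) (f T : ℝ → ℝ)
    (hα : α ∈ Set.Ioc (0:ℝ) 1) (hβ : β ∈ Set.Ioc (0:ℝ) 1) (hβα : β < α)
    (hε : 0 < ε)
    (hT : ∀ t ∈ Set.Ioo a (a + ε), HasConfDerivAt a α f t (T t))
    (hL : Tendsto T (𝓝[>] a) (𝓝 L)) :
    ∃ S : ℝ → ℝ,
      (∀ t ∈ Set.Ioo a (a + ε), HasConfDerivAt a β f t (S t)) ∧
        Tendsto S (𝓝[>] a) (𝓝 0) := by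
  refine ⟨fun t => (t - a) ^ (α - β) * T t, ?_, ?_⟩
  · intro t ht
    have hta : 0 < t - a := sub_pos.2 ht.1
    set c : ℝ := (t - a) ^ (α - β) with hc
    have hcpos : 0 < c := Real.rpow_pos_of_pos hta _
    have hmap : Tendsto (fun θ : ℝ => θ * c) (𝓝[≠] (0:ℝ)) (𝓝[≠] (0:ℝ)) := by
      rw [tendsto_nhdsWithin_iff]
      constructor
      · have := (tendsto_id.mul_const c : Tendsto (fun θ : ℝ => θ * c) (𝓝 0) (𝓝 (0 * c)))
        simpa using this.mono_left nhdsWithin_le_nhds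
      · filter_upwards [self_mem_nhdsWithin] with θ hθ
        exact mul_ne_zero hθ (ne_of_gt hcpos)
    have hcomp := ((hT t ht).comp hmap).const_mul c
    have heq : (fun θ : ℝ => c *
        ((fun θ : ℝ => (f (t + θ * (t - a) ^ (1 - α)) - f t) / θ) ∘ (fun θ => θ * c)) θ)
        =ᶠ[𝓝[≠] (0:ℝ)]
        fun θ : ℝ => (f (t + θ * (t - a) ^ (1 - β)) - f t) / θ := by
      filter_upwards [self_mem_nhdsWithin] with θ hθ
      have hθ' : (θ : ℝ) ≠ 0 := hθ
      have hbase : θ * c * (t - a) ^ (1 - α) = θ * (t - a) ^ (1 - β) := by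
        rw [hc, mul_assoc, ← Real.rpow_add hta]
        ring_nf
      simp only [Function.comp, hbase]
      field_simp
    have : HasConfDerivAt a β f t (c * T t) := by
      unfold HasConfDerivAt
      exact Tendsto.congr' heq hcomp
    exact this
  · have h1 : Tendsto (fun t : ℝ => (t - a) ^ (α - β)) (𝓝[>] a) (𝓝 0) := by
      have hsub : Tendsto (fun t : ℝ => t - a) (𝓝[>] a) (𝓝 0) := by
        have h := (Continuous.tendsto (continuous_id.sub (continuous_const (y := a))) a).mono_left
          (nhdsWithin_le_nhds (s := Set.Ioi a))
        simpa [Pi.sub_def] using h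
      have hcont : ContinuousAt (fun x : ℝ => x ^ (α - β)) 0 :=
        Real.continuousAt_rpow_const 0 (α - β) (Or.inr (by linarith))
      have := hcont.tendsto.comp hsub
      have h0 : (0:ℝ) ^ (α - β) = 0 := Real.zero_rpow (by linarith)
      simpa [Function.comp_def, h0] using this
    have := h1.mul hL
    simpa using this
end
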